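/- Let x > 0 be a vector in ℝ^N. Then I_A^b(P(x)) = I_A^b(x) holds if and only if x is a fixed point of the EM operator, i.e. P(x) = x. -/

import Mathlib

open Finset Filter Topology

noncomputable def dd {M N : ℕ} (A : Fin M → Fin N → ℝ) (x : Fin N → ℝ) (i : Fin M) : ℝ :=
  ∑ j, A i j * x j

noncomputable def ff {M N : ℕ} (A : Fin M → Fin N → ℝ) (b : Fin M → ℝ) (x : Fin N → ℝ) (j : Fin N) : ℝ :=
  ∑ i, A i j * b i / dd A x i

noncomputable def EMop {M N : ℕ} (A : Fin M → Fin N → ℝ) (b : Fin M → ℝ) (x : Fin N → ℝ) : Fin N → ℝ :=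
  fun j => x j * ff A b x j

noncomputable def KL {N : ℕ} (u v : Fin N → ℝ) : ℝ :=
  (∑ j, u j * Real.log (u j / v j)) - ∑ j, (u j - v j)

noncomputable def IAb {M N : ℕ} (A : Fin M → Fin N → ℝ) (b : Fin M → ℝ) (x : Fin N → ℝ) : ℝ :=
  (∑ i, b i * Real.log (b i / dd A x i)) - ∑ i, (b i - dd A x i)

noncomputable def finSup0 {ι : Type*} (s : Finset ι) (g : ι → ℝ) : ℝ :=
  if h : s.Nonempty then s.sup' h g else 0

noncomputable def finInf0 {ι : Type*} (s : Finset ι) (g : ι → ℝ) : ℝ :=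
  if h : s.Nonempty then s.inf' h g else 0

lemma dd_pos {M N : ℕ} {A : Fin M → Fin N → ℝ} (hA : ∀ i j, 0 ≤ A i j)
    (hrow : ∀ i, ∃ j, 0 < A i j) {x : Fin N → ℝ} (hx : ∀ j, 0 < x j) (i : Fin M) :
    0 < dd A x i := by
  obtain ⟨j, hj⟩ := hrow i
  exact Finset.sum_pos' (fun k _ => mul_nonneg (hA i k) (hx k).le)
    ⟨j, Finset.mem_univ j, mul_pos hj (hx j)⟩

lemma ff_pos {M N : ℕ} {A : Fin M → Fin N → ℝ} {b : Fin M → ℝ} (hA : ∀ i j, 0 ≤ A i j)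
    (hcol : ∀ j, ∑ i, A i j = 1) (hb : ∀ i, 0 < b i) {x : Fin N → ℝ}
    (hd : ∀ i, 0 < dd A x i) (j : Fin N) : 0 < ff A b x j := by
  have hex : ∃ i, 0 < A i j := by
    by_contra h
    push_neg at h
    have h0 : ∑ i, A i j = 0 :=
      Finset.sum_eq_zero fun i _ => le_antisymm (h i) (hA i j)
    exact one_ne_zero ((hcol j) ▸ h0)
  obtain ⟨i, hi⟩ := hex
  exact Finset.sum_pos' (fun k _ => div_nonneg (mul_nonneg (hA k j) (hb k).le) (hd k).le)
    ⟨i, Finset.mem_univ i, div_pos (mul_pos hi (hb i)) (hd i)⟩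

lemma key_nonneg {u v : ℝ} (hu : 0 < u) (hv : 0 < v) :
    0 ≤ u * Real.log (u / v) - (u - v) := by
  have h := Real.log_le_sub_one_of_pos (div_pos hv hu)
  have hlog : Real.log (u / v) = - Real.log (v / u) := by
    rw [← Real.log_inv]
    congr 1
    field_simp
  have hvu : u * (v / u) = v := by field_simp
  rw [hlog]
  nlinarith [mul_le_mul_of_nonneg_left h hu.le]

lemma key_eq {u v : ℝ} (hu : 0 < u) (hv : 0 < v)
    (h : u * Real.log (u / v) - (u - v) = 0) : u = v := by
  by_contra hne
  have hne' : v / u ≠ 1 := by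
    intro h1
    exact hne (by field_simp at h1; linarith)
  have hstrict := Real.log_lt_sub_one_of_pos (div_pos hv hu) hne'
  have hlog : Real.log (u / v) = - Real.log (v / u) := by
    rw [← Real.log_inv]; congr 1; field_simp
  have hvu : u * (v / u) = v := by field_simp
  rw [hlog] at h
  nlinarith [mul_lt_mul_of_pos_left hstrict hu]

lemma jensen_log {M N : ℕ} {A : Fin M → Fin N → ℝ} {b : Fin M → ℝ} {x : Fin N → ℝ}
    (hA : ∀ i j, 0 ≤ A i j) (hx : ∀ j, 0 < x j)
    (hf : ∀ j, 0 < ff A b x j) (i : Fin M) (hd : 0 < dd A x i) :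
    ∑ j, (A i j * x j / dd A x i) * Real.log (ff A b x j)
      ≤ Real.log (dd A (EMop A b x) i / dd A x i) := by
  have hw : ∀ j ∈ Finset.univ, 0 ≤ A i j * x j / dd A x i := fun j _ =>
    div_nonneg (mul_nonneg (hA i j) (hx j).le) hd.le
  have hw1 : ∑ j, A i j * x j / dd A x i = 1 := by
    rw [← Finset.sum_div]
    exact div_self hd.ne'
  have hmem : ∀ j ∈ Finset.univ, ff A b x j ∈ Set.Ioi (0:ℝ) := fun j _ => hf j
  have h := (strictConcaveOn_log_Ioi.concaveOn).le_map_sum hw hw1 hmem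
  simp only [smul_eq_mul] at h
  have hrw : ∑ j, (A i j * x j / dd A x i) * ff A b x j
      = dd A (EMop A b x) i / dd A x i := by
    rw [show dd A (EMop A b x) i = ∑ j, A i j * (x j * ff A b x j) from rfl,
      Finset.sum_div]
    exact Finset.sum_congr rfl fun j _ => by ring
  rw [hrw] at h
  exact h

theorem stmt_2
    (M N : ℕ) (hM : 0 < M) (hN : 0 < N)
    (A : Fin M → Fin N → ℝ) (b : Fin M → ℝ)
    (hA : ∀ i j, 0 ≤ A i j)
    (hcol : ∀ j, ∑ i, A i j = 1)
    (hrow : ∀ i, ∃ j, 0 < A i j)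
    (hb : ∀ i, 0 < b i)
    (x : Fin N → ℝ) (hx : ∀ j, 0 < x j) :
    IAb A b (EMop A b x) = IAb A b x ↔ EMop A b x = x := by
  have hd : ∀ i, 0 < dd A x i := dd_pos hA hrow hx
  have hf : ∀ j, 0 < ff A b x j := ff_pos hA hcol hb hd
  have hPx : ∀ j, 0 < EMop A b x j := fun j => mul_pos (hx j) (hf j)
  have hd' : ∀ i, 0 < dd A (EMop A b x) i := dd_pos hA hrow hPx
  constructor
  · intro heq
    -- decomposition of the difference
    have key1 : IAb A b x - IAb A b (EMop A b x)
        = ∑ i, (b i * Real.log (dd A (EMop A b x) i / dd A x i)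
            + (dd A x i - dd A (EMop A b x) i)) := by
      have h1 : ∀ i : Fin M, b i * Real.log (dd A (EMop A b x) i / dd A x i)
          + (dd A x i - dd A (EMop A b x) i)
          = (b i * Real.log (b i / dd A x i) - (b i - dd A x i))
            - (b i * Real.log (b i / dd A (EMop A b x) i) - (b i - dd A (EMop A b x) i)) := by
        intro i
        rw [Real.log_div (hb i).ne' (hd i).ne', Real.log_div (hb i).ne' (hd' i).ne',
          Real.log_div (hd' i).ne' (hd i).ne']
        ring
      refine Eq.symm ?_
      calc ∑ i, (b i * Real.log (dd A (EMop A b x) i / dd A x i)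
              + (dd A x i - dd A (EMop A b x) i))
          = ∑ i, ((b i * Real.log (b i / dd A x i) - (b i - dd A x i))
              - (b i * Real.log (b i / dd A (EMop A b x) i) - (b i - dd A (EMop A b x) i))) :=
            Finset.sum_congr rfl fun i _ => h1 i
        _ = (∑ i, (b i * Real.log (b i / dd A x i) - (b i - dd A x i)))
              - ∑ i, (b i * Real.log (b i / dd A (EMop A b x) i) - (b i - dd A (EMop A b x) i)) :=
            Finset.sum_sub_distrib _ _
        _ = IAb A b x - IAb A b (EMop A b x) := by
            unfold IAb
            simp only [Finset.sum_sub_distrib]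
    -- column swaps
    have swap1 : ∑ i, dd A x i = ∑ j, x j := by
      unfold dd
      rw [Finset.sum_comm]
      exact Finset.sum_congr rfl fun j _ => by rw [← Finset.sum_mul, hcol j, one_mul]
    have swap2 : ∑ i, dd A (EMop A b x) i = ∑ j, x j * ff A b x j := by
      unfold dd
      rw [Finset.sum_comm]
      exact Finset.sum_congr rfl fun j _ => by
        rw [← Finset.sum_mul, hcol j, one_mul]; rfl
    -- the jensen bound summed over i
    have inner : ∀ j : Fin N, x j * ff A b x j * Real.log (ff A b x j)
        = ∑ i, b i * ((A i j * x j / dd A x i) * Real.log (ff A b x j)) := by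
      intro j
      have hffj : ff A b x j = ∑ i, A i j * b i / dd A x i := rfl
      rw [hffj]
      simp only [Finset.mul_sum, Finset.sum_mul]
      exact Finset.sum_congr rfl fun i _ => by ring
    have jsum : ∑ j, x j * ff A b x j * Real.log (ff A b x j)
        ≤ ∑ i, b i * Real.log (dd A (EMop A b x) i / dd A x i) := by
      calc ∑ j, x j * ff A b x j * Real.log (ff A b x j)
          = ∑ j, ∑ i, b i * ((A i j * x j / dd A x i) * Real.log (ff A b x j)) :=
            Finset.sum_congr rfl fun j _ => inner j
        _ = ∑ i, ∑ j, b i * ((A i j * x j / dd A x i) * Real.log (ff A b x j)) :=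
            Finset.sum_comm
        _ = ∑ i, b i * ∑ j, (A i j * x j / dd A x i) * Real.log (ff A b x j) :=
            Finset.sum_congr rfl fun i _ => (Finset.mul_sum _ _ _).symm
        _ ≤ ∑ i, b i * Real.log (dd A (EMop A b x) i / dd A x i) :=
            Finset.sum_le_sum fun i _ =>
              mul_le_mul_of_nonneg_left (jensen_log hA hx hf i (hd i)) (hb i).le
    -- main inequality
    have hS : ∑ j, (x j * ff A b x j * Real.log (ff A b x j) - (x j * ff A b x j - x j))
        ≤ IAb A b x - IAb A b (EMop A b x) := by
      have hR : ∑ i, (b i * Real.log (dd A (EMop A b x) i / dd A x i)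
            + (dd A x i - dd A (EMop A b x) i))
          = (∑ i, b i * Real.log (dd A (EMop A b x) i / dd A x i))
            + ((∑ j, x j) - ∑ j, x j * ff A b x j) := by
        rw [Finset.sum_add_distrib, Finset.sum_sub_distrib, swap1, swap2]
      have hL : ∑ j, (x j * ff A b x j * Real.log (ff A b x j) - (x j * ff A b x j - x j))
          = (∑ j, x j * ff A b x j * Real.log (ff A b x j))
            - ((∑ j, x j * ff A b x j) - ∑ j, x j) := by
        rw [Finset.sum_sub_distrib, Finset.sum_sub_distrib]
      rw [key1, hR, hL]
      linarith [jsum]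
    rw [heq, sub_self] at hS
    have hterm : ∀ j ∈ Finset.univ,
        0 ≤ x j * ff A b x j * Real.log (ff A b x j) - (x j * ff A b x j - x j) := by
      intro j _
      have h0 := key_nonneg (mul_pos (hx j) (hf j)) (hx j)
      rwa [mul_div_cancel_left₀ _ (hx j).ne'] at h0
    have hsum0 : ∑ j, (x j * ff A b x j * Real.log (ff A b x j) - (x j * ff A b x j - x j)) = 0 :=
      le_antisymm hS (Finset.sum_nonneg hterm)
    have hzero := (Finset.sum_eq_zero_iff_of_nonneg hterm).mp hsum0
    funext j
    have hj := hzero j (Finset.mem_univ j)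
    have hj' : x j * ff A b x j * Real.log (x j * ff A b x j / x j)
        - (x j * ff A b x j - x j) = 0 := by
      rwa [mul_div_cancel_left₀ _ (hx j).ne']
    exact key_eq (mul_pos (hx j) (hf j)) (hx j) hj'
  · intro h
    rw [h]
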